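/- arXiv:1210.7050 — 4 statements merged into one kernel-verified Lean document; each statement's English description precedes it below -/
import Mathlib

section
/- Let A be a closed subset of the plane ℝ², and let x, y ∈ ℝ² ∖ A be points lying in different connected components of ℝ² ∖ A. Then there exists a connected component K of A such that x and y lie in different connected components of ℝ² ∖ K. -/
open Set Complex Filter Metric Topology

noncomputable section

/-- In an open subset of a locally path connected space, same connected component implies joined. -/
lemma joinedIn_of_cc {U : Set ℂ} (hU : IsOpen U) {a b : ℂ} (ha : a ∈ U) (hb : b ∈ U)
    (h : connectedComponentIn U a = connectedComponentIn U b) : JoinedIn U a b := by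
  have hconn : IsConnected (connectedComponentIn U a) :=
    isConnected_connectedComponentIn_iff.mpr ha
  have hopen : IsOpen (connectedComponentIn U a) := hU.connectedComponentIn
  have hpath : IsPathConnected (connectedComponentIn U a) :=
    hopen.isConnected_iff_isPathConnected.mp hconn
  have hbmem : b ∈ connectedComponentIn U a := by
    rw [h]; exact mem_connectedComponentIn hb
  exact (hpath.joinedIn a (mem_connectedComponentIn ha) b hbmem).mono
    (connectedComponentIn_subset U a)

lemma cc_of_joinedIn {U : Set ℂ} {a b : ℂ} (h : JoinedIn U a b) :
    connectedComponentIn U a = connectedComponentIn U b := by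
  obtain ⟨γ, hγ⟩ := h
  have hr : IsPreconnected (range γ) :=
    (isConnected_range γ.continuous).isPreconnected
  have hsub : range γ ⊆ U := range_subset_iff.mpr hγ
  have hb : b ∈ connectedComponentIn U a := by
    have := hr.subset_connectedComponentIn (x := a) ⟨0, γ.source⟩ hsub
    exact this ⟨1, γ.target⟩
  exact (connectedComponentIn_eq hb)

/-- Telescoping: `exp (∑ log (F(i+1)/F i)) = F n / F 0`. -/
lemma exp_sum_log_telescope (n : ℕ) (F : ℕ → ℂ) (hF : ∀ i, i ≤ n → F i ≠ 0) :
    Complex.exp (∑ i ∈ Finset.range n, Complex.log (F (i + 1) / F i)) = F n / F 0 := by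
  induction n with
  | zero => simp [div_self (hF 0 le_rfl)]
  | succ m ih =>
    rw [Finset.sum_range_succ, Complex.exp_add,
      ih (fun i hi => hF i (hi.trans (Nat.le_succ m))),
      Complex.exp_log (div_ne_zero (hF (m+1) le_rfl) (hF m (Nat.le_succ m)))]
    have h0 := hF 0 (Nat.zero_le _)
    have hm := hF m (Nat.le_succ m)
    have hm1 := hF (m+1) le_rfl
    field_simp

/-- There is no continuous logarithm of `z - a` on a circle around `a`. -/
lemma no_log_on_sphere {a : ℂ} {R : ℝ} (hR : 0 < R) (g : ℂ → ℂ)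
    (hg : ContinuousOn g (sphere a R))
    (he : ∀ z ∈ sphere a R, Complex.exp (g z) = z - a) : False := by
  set c : ℝ → ℂ := fun θ => a + (R : ℂ) * Complex.exp (θ * I) with hc
  have hcmem : ∀ θ : ℝ, c θ ∈ sphere a R := by
    intro θ
    simp only [hc, mem_sphere_iff_norm, add_sub_cancel_left]
    rw [norm_mul]
    simp [Complex.norm_exp_ofReal_mul_I, abs_of_pos hR]
  have hccont : Continuous c := by continuity
  set φ : ℝ → ℂ := fun θ => g (c θ) - ((Real.log R : ℂ) + θ * I) with hφ
  have hexpφ : ∀ θ : ℝ, Complex.exp (φ θ) = 1 := by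
    intro θ
    rw [hφ]
    simp only
    rw [Complex.exp_sub, he (c θ) (hcmem θ), Complex.exp_add]
    rw [hc]
    simp only [add_sub_cancel_left]
    rw [← Complex.ofReal_exp, Real.exp_log hR]
    have hne1 : (Complex.exp ((θ:ℂ) * I)) ≠ 0 := Complex.exp_ne_zero _
    have hne2 : (R : ℂ) ≠ 0 := by exact_mod_cast hR.ne'
    field_simp
  have hint : ∀ θ : ℝ, ∃ n : ℤ, (φ θ).im = n * (2 * Real.pi) := by
    intro θ
    obtain ⟨n, hn⟩ := Complex.exp_eq_one_iff.mp (hexpφ θ)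
    refine ⟨n, ?_⟩
    rw [hn]
    simp [Complex.mul_im]
    try ring
  have hψcont : ContinuousOn (fun θ => (φ θ).im) (Icc 0 (2 * Real.pi)) := by
    apply Complex.continuous_im.comp_continuousOn
    apply ContinuousOn.sub
    · exact hg.comp hccont.continuousOn (fun θ _ => hcmem θ)
    · exact (continuous_const.add (continuous_ofReal.mul continuous_const)).continuousOn
  have hc2π : c (2 * Real.pi) = c 0 := by
    simp only [hc]
    have : ((2 * Real.pi : ℝ) : ℂ) * I = 2 * Real.pi * I := by push_cast; ring
    rw [this, Complex.exp_two_pi_mul_I]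
    norm_num
  have hdiff : (φ (2 * Real.pi)).im = (φ 0).im - 2 * Real.pi := by
    simp only [hφ, hc2π]
    simp [Complex.sub_im, Complex.add_im, Complex.mul_im]
  -- intermediate value
  have h2π : (0:ℝ) ≤ 2 * Real.pi := by positivity
  have := intermediate_value_Icc' h2π hψcont
  have hmem : (φ 0).im - Real.pi ∈ Icc ((fun θ => (φ θ).im) (2*Real.pi)) ((fun θ => (φ θ).im) 0) := by
    simp only [hdiff]
    constructor <;> nlinarith [Real.pi_pos]
  obtain ⟨θ₀, _, hθ₀⟩ := this hmem
  obtain ⟨n₁, hn₁⟩ := hint θ₀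
  obtain ⟨n₀, hn₀⟩ := hint 0
  simp only at hθ₀
  rw [hn₁, hn₀] at hθ₀
  have hπ : ((2 * n₁ - 2 * n₀ + 1 : ℤ) : ℝ) * Real.pi = 0 := by push_cast; nlinarith
  have := mul_eq_zero.mp hπ
  rcases this with h | h
  · have : (2 * n₁ - 2 * n₀ + 1 : ℤ) = 0 := by exact_mod_cast h
    omega
  · exact Real.pi_ne_zero h

/-- `f = (z-a)/(z-b)` has a continuous logarithm on `S` vanishing at infinity. -/
def HasLog (S : Set ℂ) (a b : ℂ) : Prop :=
  ∃ g : ℂ → ℂ, ContinuousOn g S ∧ (∀ z ∈ S, Complex.exp (g z) = (z - a) / (z - b)) ∧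
    Tendsto g (Bornology.cobounded ℂ ⊓ 𝓟 S) (𝓝 0)

lemma mem_slitPlane_of_norm_lt_one {w : ℂ} (h : ‖w - 1‖ < 1) : w ∈ Complex.slitPlane := by
  rw [Complex.mem_slitPlane_iff]
  left
  have h1 : |(w - 1).re| ≤ ‖w - 1‖ := Complex.abs_re_le_norm _
  have h2 : (w - 1).re = w.re - 1 := by simp
  have := abs_le.mp h1
  linarith [this.1]

lemma hasLog_swap {K : Set ℂ} {a b : ℂ} (ha : a ∉ K) (hb : b ∉ K) (h : HasLog K a b) :
    HasLog K b a := by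
  obtain ⟨g, hg, he, ht⟩ := h
  refine ⟨fun z => -g z, hg.neg, fun z hz => ?_, ?_⟩
  · rw [Complex.exp_neg, he z hz]
    rw [inv_div]
  · simpa using ht.neg

lemma tendsto_const_div_sub (c u : ℂ) :
    Tendsto (fun z => c / (z - u)) (Bornology.cobounded ℂ) (𝓝 0) := by
  rw [Metric.tendsto_nhds]
  intro ε hε
  filter_upwards [tendsto_norm_cobounded_atTop.eventually_ge_atTop (‖u‖ + ‖c‖ / ε + 1)] with z hz
  have hzu : ‖c‖ / ε + 1 ≤ ‖z - u‖ := by linarith [norm_sub_norm_le z u]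
  have hc0 : (0:ℝ) ≤ ‖c‖ / ε := by positivity
  have hpos : (0:ℝ) < ‖z - u‖ := by linarith
  rw [dist_zero_right, norm_div, div_lt_iff₀ hpos]
  have : ‖c‖ < ε * (‖c‖ / ε + 1) := by
    rw [mul_add, mul_div_cancel₀ _ hε.ne']
    linarith
  calc ‖c‖ < ε * (‖c‖ / ε + 1) := this
    _ ≤ ε * ‖z - u‖ := by apply mul_le_mul_of_nonneg_left hzu hε.le

/-- Key construction: if `a, b` lie in the same connected component of `Kᶜ`
(`K` closed), then `(z-a)/(z-b)` has a logarithm on `K` vanishing at infinity. -/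
lemma hasLog_of_same_component {K : Set ℂ} (hK : IsClosed K) {a b : ℂ} (ha : a ∉ K) (hb : b ∉ K)
    (h : connectedComponentIn Kᶜ a = connectedComponentIn Kᶜ b) : HasLog K a b := by
  apply hasLog_swap hb ha
  -- we construct a log of (z-b)/(z-a)
  have hJ : JoinedIn Kᶜ a b := joinedIn_of_cc hK.isOpen_compl ha hb h
  obtain ⟨γ, hγ⟩ := hJ
  have hrange : range γ ⊆ Kᶜ := range_subset_iff.mpr hγ
  obtain ⟨δ, hδpos, hδ⟩ := (isCompact_range γ.continuous).exists_thickening_subset_open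
    hK.isOpen_compl hrange
  have hdist : ∀ t : ℝ, ∀ z ∈ K, δ ≤ dist z (γ.extend t) := by
    intro t z hz
    by_contra hlt
    push_neg at hlt
    have : z ∈ Metric.thickening δ (range γ) := by
      rw [Metric.mem_thickening_iff]
      exact ⟨γ.extend t, by rw [← Path.extend_range]; exact mem_range_self t, hlt⟩
    exact (hδ this) hz
  have huc := (isCompact_Icc (a := (0:ℝ)) (b := 1)).uniformContinuousOn_of_continuous
    γ.continuous_extend.continuousOn
  rw [Metric.uniformContinuousOn_iff] at huc
  obtain ⟨d, hdpos, hd⟩ := huc δ hδpos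
  obtain ⟨n, hn⟩ := exists_nat_one_div_lt hdpos
  set m : ℕ := n + 1 with hm
  have hmpos : (0:ℝ) < (m:ℝ) := by positivity
  have hn' : 1 / (m:ℝ) < d := by rw [hm]; push_cast; exact hn
  clear_value m
  clear hn hm
  set p : ℕ → ℂ := fun i => γ.extend (i / m) with hp
  have hpK : ∀ i, ∀ z ∈ K, δ ≤ dist z (p i) := fun i z hz => hdist _ z hz
  have hpne : ∀ i, ∀ z ∈ K, z - p i ≠ 0 := by
    intro i z hz
    have h1 := hpK i z hz
    rw [dist_eq_norm] at h1
    intro hcon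
    rw [hcon, norm_zero] at h1
    linarith
  have hstep : ∀ i : ℕ, i < m → dist (p (i+1)) (p i) < δ := by
    intro i hi
    apply hd
    · refine ⟨by positivity, ?_⟩
      rw [div_le_one hmpos]
      exact_mod_cast hi
    · refine ⟨by positivity, ?_⟩
      rw [div_le_one hmpos]
      have : (i:ℝ) < (m:ℝ) := by exact_mod_cast hi
      linarith
    · rw [Real.dist_eq]
      have heq : ((i+1 : ℕ):ℝ)/(m:ℝ) - (i:ℝ)/(m:ℝ) = 1/(m:ℝ) := by
        push_cast
        field_simp
        ring
      rw [heq, abs_of_pos (by positivity)]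
      exact hn'
  set rat : ℕ → ℂ → ℂ := fun i z => (z - p (i+1)) / (z - p i) with hrat
  have hratnorm : ∀ i, i < m → ∀ z ∈ K, ‖rat i z - 1‖ < 1 := by
    intro i hi z hz
    have hne := hpne i z hz
    have heq : rat i z - 1 = (p i - p (i+1)) / (z - p i) := by
      rw [hrat]
      field_simp
      ring
    rw [heq, norm_div]
    rw [div_lt_one (by rw [← dist_eq_norm]; linarith [hpK i z hz, hδpos])]
    calc ‖p i - p (i+1)‖ = dist (p (i+1)) (p i) := by rw [dist_eq_norm, norm_sub_rev]
      _ < δ := hstep i hi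
      _ ≤ ‖z - p i‖ := by rw [← dist_eq_norm]; exact hpK i z hz
  refine ⟨fun z => ∑ i ∈ Finset.range m, Complex.log (rat i z), ?_, ?_, ?_⟩
  · apply continuousOn_finset_sum
    intro i hi
    rw [Finset.mem_range] at hi
    apply ContinuousOn.clog
    · apply ContinuousOn.div
      · fun_prop
      · fun_prop
      · exact fun z hz => hpne i z hz
    · exact fun z hz => mem_slitPlane_of_norm_lt_one (hratnorm i hi z hz)
  · intro z hz
    have htel := exp_sum_log_telescope m (fun i => z - p i) (fun i _ => hpne i z hz)
    beta_reduce at htel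
    have h0 : p 0 = a := by
      simp only [hp]
      norm_num
    have h1 : p m = b := by
      simp only [hp]
      rw [div_self hmpos.ne']
      simp
    show Complex.exp (∑ i ∈ Finset.range m, Complex.log ((z - p (i+1)) / (z - p i)))
      = (z - b) / (z - a)
    rw [htel, h0, h1]
  · have hterm : ∀ i ∈ Finset.range m, Tendsto (fun z => Complex.log (rat i z))
        (Bornology.cobounded ℂ ⊓ 𝓟 K) (𝓝 0) := by
      intro i hi
      rw [Finset.mem_range] at hi
      have hne' : ∀ᶠ z in Bornology.cobounded ℂ ⊓ 𝓟 K, z - p i ≠ 0 := by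
        rw [Filter.eventually_inf_principal]
        exact Filter.Eventually.of_forall (fun z hz => hpne i z hz)
      have hcongr : ∀ᶠ z in Bornology.cobounded ℂ ⊓ 𝓟 K,
          1 + (p i - p (i+1)) / (z - p i) = rat i z := by
        filter_upwards [hne'] with z hz
        rw [hrat]
        field_simp
        ring
      have hlim : Tendsto (fun z => 1 + (p i - p (i+1)) / (z - p i))
          (Bornology.cobounded ℂ ⊓ 𝓟 K) (𝓝 1) := by
        have := (tendsto_const_div_sub (p i - p (i+1)) (p i)).mono_left
          (inf_le_left : Bornology.cobounded ℂ ⊓ 𝓟 K ≤ _)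
        simpa using tendsto_const_nhds.add this
      have hra : Tendsto (fun z => rat i z) (Bornology.cobounded ℂ ⊓ 𝓟 K) (𝓝 1) :=
        hlim.congr' hcongr
      have hcont : ContinuousAt Complex.log 1 :=
        continuousAt_clog Complex.one_mem_slitPlane
      have hfin := hcont.tendsto.comp hra
      rw [Complex.log_one] at hfin
      exact hfin
    have := tendsto_finset_sum (Finset.range m) hterm
    simpa using this

/-- A continuous nonvanishing function on `ℂ` has a continuous logarithm on any closed ball. -/
lemma exists_log_on_closedBall (Φ : ℂ → ℂ) (hΦ : Continuous Φ) (hne : ∀ z, Φ z ≠ 0)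
    (c : ℂ) (R : ℝ) (hR : 0 ≤ R) :
    ∃ g : ℂ → ℂ, ContinuousOn g (Metric.closedBall c R) ∧
      ∀ z ∈ Metric.closedBall c R, Complex.exp (g z) = Φ z := by
  set K := Metric.closedBall c R with hK
  have hKc : IsCompact K := isCompact_closedBall c R
  set Ψ : ℝ × ℂ → ℂ := fun q => Φ (c + (q.1 : ℂ) * (q.2 - c)) with hΨ
  have hΨc : Continuous Ψ := by fun_prop
  have hmem : ∀ t ∈ Icc (0:ℝ) 1, ∀ z ∈ K, c + (t:ℂ) * (z - c) ∈ K := by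
    intro t ht z hz
    rw [hK, Metric.mem_closedBall, dist_eq_norm] at hz ⊢
    have : c + (t:ℂ) * (z - c) - c = (t:ℂ) * (z - c) := by ring
    rw [this, norm_mul, Complex.norm_real, Real.norm_eq_abs, _root_.abs_of_nonneg ht.1]
    calc t * ‖z - c‖ ≤ 1 * ‖z - c‖ := by
          apply mul_le_mul_of_nonneg_right ht.2 (norm_nonneg _)
      _ ≤ R := by rw [one_mul]; exact hz
  obtain ⟨w₀, hw₀K, hw₀⟩ := hKc.exists_isMinOn ⟨c, Metric.mem_closedBall_self hR⟩
    (hΦ.norm.continuousOn)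
  set ε := ‖Φ w₀‖ with hε
  have hεpos : 0 < ε := norm_pos_iff.mpr (hne w₀)
  have hlow : ∀ w ∈ K, ε ≤ ‖Φ w‖ := fun w hw => isMinOn_iff.mp hw₀ w hw
  have huc := (isCompact_Icc (a := (0:ℝ)) (b := 1)).prod hKc
    |>.uniformContinuousOn_of_continuous hΨc.continuousOn
  rw [Metric.uniformContinuousOn_iff] at huc
  obtain ⟨d, hdpos, hd⟩ := huc ε hεpos
  obtain ⟨n, hn⟩ := exists_nat_one_div_lt hdpos
  set m : ℕ := n + 1 with hm
  have hmpos : (0:ℝ) < (m:ℝ) := by positivity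
  have hn' : 1 / (m:ℝ) < d := by rw [hm]; push_cast; exact hn
  clear_value m
  clear hn hm
  set F : ℕ → ℂ → ℂ := fun i z => Ψ ((i:ℝ)/(m:ℝ), z) with hF
  have hIcc : ∀ i : ℕ, i ≤ m → (i:ℝ)/(m:ℝ) ∈ Icc (0:ℝ) 1 := by
    intro i hi
    refine ⟨by positivity, ?_⟩
    rw [div_le_one hmpos]
    exact_mod_cast hi
  have hFK : ∀ i : ℕ, i ≤ m → ∀ z ∈ K, c + (((i:ℝ)/(m:ℝ) : ℝ) : ℂ) * (z - c) ∈ K :=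
    fun i hi z hz => hmem _ (hIcc i hi) z hz
  have hFne : ∀ i, ∀ z, F i z ≠ 0 := fun i z => hne _
  have hFlow : ∀ i : ℕ, i ≤ m → ∀ z ∈ K, ε ≤ ‖F i z‖ := by
    intro i hi z hz
    exact hlow _ (hFK i hi z hz)
  have hstep : ∀ i : ℕ, i < m → ∀ z ∈ K, ‖F (i+1) z - F i z‖ < ε := by
    intro i hi z hz
    have h1 : ((((i:ℕ)+1 : ℕ):ℝ)/(m:ℝ), z) ∈ Icc (0:ℝ) 1 ×ˢ K :=
      ⟨hIcc (i+1) hi, hz⟩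
    have h2 : (((i:ℕ):ℝ)/(m:ℝ), z) ∈ Icc (0:ℝ) 1 ×ˢ K :=
      ⟨hIcc i hi.le, hz⟩
    have hdist : dist ((((i:ℕ)+1 : ℕ):ℝ)/(m:ℝ), z) ((((i:ℕ):ℝ)/(m:ℝ), z)) < d := by
      rw [Prod.dist_eq]
      simp only [dist_self]
      rw [Real.dist_eq]
      have heq : ((i+1 : ℕ):ℝ)/(m:ℝ) - (i:ℝ)/(m:ℝ) = 1/(m:ℝ) := by
        push_cast
        field_simp
        ring
      rw [heq, _root_.abs_of_pos (by positivity),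
        sup_eq_left.mpr (by positivity : (0:ℝ) ≤ 1/(m:ℝ))]
      exact hn'
    have := hd _ h1 _ h2 hdist
    rw [dist_eq_norm] at this
    exact this
  have hratnorm : ∀ i : ℕ, i < m → ∀ z ∈ K, ‖F (i+1) z / F i z - 1‖ < 1 := by
    intro i hi z hz
    have hne0 := hFne i z
    have heq : F (i+1) z / F i z - 1 = (F (i+1) z - F i z) / F i z := by
      field_simp
    rw [heq, norm_div, div_lt_one (lt_of_lt_of_le hεpos (hFlow i hi.le z hz))]
    exact lt_of_lt_of_le (hstep i hi z hz) (hFlow i hi.le z hz)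
  refine ⟨fun z => Complex.log (Φ c) + ∑ i ∈ Finset.range m, Complex.log (F (i+1) z / F i z),
    ?_, ?_⟩
  · apply ContinuousOn.add continuousOn_const
    apply continuousOn_finset_sum
    intro i hi
    rw [Finset.mem_range] at hi
    apply ContinuousOn.clog
    · apply ContinuousOn.div
      · exact (hΨc.comp (by fun_prop : Continuous fun z : ℂ => ((((i:ℕ)+1:ℕ):ℝ)/(m:ℝ), z))).continuousOn
      · exact (hΨc.comp (by fun_prop : Continuous fun z : ℂ => ((((i:ℕ):ℕ):ℝ)/(m:ℝ), z))).continuousOn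
      · exact fun z _ => hFne i z
    · exact fun z hz => mem_slitPlane_of_norm_lt_one (hratnorm i hi z hz)
  · intro z hz
    rw [Complex.exp_add, Complex.exp_log (hne c)]
    have htel := exp_sum_log_telescope m (fun i => F i z) (fun i _ => hFne i z)
    beta_reduce at htel
    rw [htel]
    have h0 : F 0 z = Φ c := by
      simp only [hF, hΨ]
      norm_num
    have h1 : F m z = Φ z := by
      simp only [hF, hΨ]
      rw [div_self hmpos.ne']
      norm_num
    rw [h0, h1]
    rw [mul_div_cancel₀ _ (hne c)]

/-- The closure of a connected component of the complement of a closed set stays inside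
the component together with the closed set. -/
lemma closure_cc_subset {S : Set ℂ} (hS : IsClosed S) (a : ℂ) :
    closure (connectedComponentIn Sᶜ a) ⊆ connectedComponentIn Sᶜ a ∪ S := by
  intro x hx
  by_contra hcon
  rw [mem_union] at hcon
  obtain ⟨hx1, hx2⟩ := not_or.mp hcon
  have hxS : x ∈ Sᶜ := hx2
  have hW : IsOpen (connectedComponentIn Sᶜ x) := hS.isOpen_compl.connectedComponentIn
  have hxW : x ∈ connectedComponentIn Sᶜ x := mem_connectedComponentIn hxS
  obtain ⟨y, hy1, hy2⟩ := mem_closure_iff.mp hx _ hW hxW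
  have h1 : connectedComponentIn Sᶜ x = connectedComponentIn Sᶜ y := connectedComponentIn_eq hy1
  have h2 : connectedComponentIn Sᶜ a = connectedComponentIn Sᶜ y := connectedComponentIn_eq hy2
  exact hx1 (h2.trans h1.symm ▸ hxW)

/-- Points outside a closed ball are joined in the complement of the ball. -/
lemma joinedIn_norm_gt {r : ℝ} (hr : 0 ≤ r) {z w : ℂ} (hz : r < ‖z‖) (hw : r < ‖w‖) :
    JoinedIn {v : ℂ | r < ‖v‖} z w := by
  have hznorm : (0:ℝ) < ‖z‖ := lt_of_le_of_lt hr hz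
  have hwnorm : (0:ℝ) < ‖w‖ := lt_of_le_of_lt hr hw
  set z' : ℂ := z * ((‖w‖ / ‖z‖ : ℝ) : ℂ) with hz'
  have hz'norm : ‖z'‖ = ‖w‖ := by
    rw [hz', norm_mul, Complex.norm_real, Real.norm_eq_abs,
      _root_.abs_of_pos (by positivity), mul_comm, div_mul_cancel₀ _ hznorm.ne']
  have hJ1 : JoinedIn {v : ℂ | r < ‖v‖} z z' := by
    refine ⟨⟨⟨fun t => z * (((1 - (t:ℝ)) + (t:ℝ) * (‖w‖ / ‖z‖) : ℝ) : ℂ), by fun_prop⟩,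
      by norm_num, by norm_num [hz', Complex.ofReal_div]⟩, ?_⟩
    intro t
    have ht0 : (0:ℝ) ≤ (t:ℝ) := t.2.1
    have ht1 : (t:ℝ) ≤ 1 := t.2.2
    simp only [mem_setOf_eq, Path.coe_mk_mk]
    rw [norm_mul, Complex.norm_real, Real.norm_eq_abs]
    have h1 : r / ‖z‖ < 1 := (div_lt_one hznorm).mpr hz
    have h2 : r / ‖z‖ < ‖w‖ / ‖z‖ := div_lt_div_of_pos_right hw hznorm |>.trans_le
      (by rw [div_le_div_iff_of_pos_right hznorm])
    have hval : r / ‖z‖ < (1 - (t:ℝ)) + (t:ℝ) * (‖w‖ / ‖z‖) := by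
      nlinarith [mul_nonneg ht0 (sub_pos.mpr h2).le,
        mul_nonneg (sub_nonneg.mpr ht1) (sub_pos.mpr h1).le]
    have hvpos : (0:ℝ) ≤ (1 - (t:ℝ)) + (t:ℝ) * (‖w‖ / ‖z‖) := le_trans (by positivity) hval.le
    rw [_root_.abs_of_nonneg hvpos]
    calc r = (r / ‖z‖) * ‖z‖ := (div_mul_cancel₀ r hznorm.ne').symm
      _ < ((1 - (t:ℝ)) + (t:ℝ) * (‖w‖ / ‖z‖)) * ‖z‖ := mul_lt_mul_of_pos_right hval hznorm
      _ = ‖z‖ * ((1 - (t:ℝ)) + (t:ℝ) * (‖w‖ / ‖z‖)) := by ring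
  have hJ2 : JoinedIn {v : ℂ | r < ‖v‖} z' w := by
    refine ⟨⟨⟨fun t => ((‖w‖ : ℝ) : ℂ) *
      Complex.exp ((((1 - (t:ℝ)) * Complex.arg z' + (t:ℝ) * Complex.arg w : ℝ) : ℂ) * I),
      by fun_prop⟩, ?_, ?_⟩, ?_⟩
    · show ((‖w‖ : ℝ) : ℂ) * Complex.exp ((((1 - (0:ℝ)) * Complex.arg z' +
        (0:ℝ) * Complex.arg w : ℝ) : ℂ) * I) = z'
      rw [show ((1 - (0:ℝ)) * Complex.arg z' + (0:ℝ) * Complex.arg w : ℝ) = Complex.arg z' by ring]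
      rw [← hz'norm]
      exact Complex.norm_mul_exp_arg_mul_I z'
    · show ((‖w‖ : ℝ) : ℂ) * Complex.exp ((((1 - (1:ℝ)) * Complex.arg z' +
        (1:ℝ) * Complex.arg w : ℝ) : ℂ) * I) = w
      rw [show ((1 - (1:ℝ)) * Complex.arg z' + (1:ℝ) * Complex.arg w : ℝ) = Complex.arg w by ring]
      exact Complex.norm_mul_exp_arg_mul_I w
    · intro t
      simp only [mem_setOf_eq, Path.coe_mk_mk]
      rw [norm_mul, Complex.norm_exp_ofReal_mul_I, mul_one, Complex.norm_real,
        Real.norm_eq_abs, _root_.abs_of_pos hwnorm]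
      exact hw
  exact hJ1.trans hJ2

/-- Core lemma: a compact set with a continuous logarithm of `(z-a)/(z-b)` cannot
separate `a` from `b` when the component of `a` is bounded. -/
lemma compact_core {A : Set ℂ} (hA : IsCompact A) {a b : ℂ} (ha : a ∉ A) (hb : b ∉ A)
    (g : ℂ → ℂ) (hg : ContinuousOn g A)
    (he : ∀ z ∈ A, Complex.exp (g z) = (z - a) / (z - b))
    (hUb : Bornology.IsBounded (connectedComponentIn Aᶜ a))
    (hne : connectedComponentIn Aᶜ a ≠ connectedComponentIn Aᶜ b) : False := by
  classical
  have hAc : IsClosed A := hA.isClosed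
  set U := connectedComponentIn Aᶜ a with hU
  have haU : a ∈ U := mem_connectedComponentIn ha
  have hbU : b ∉ closure U := by
    intro hmem
    rcases closure_cc_subset hAc a hmem with h | h
    · exact hne (connectedComponentIn_eq h)
    · exact hb h
  -- Tietze extension of g
  have hgr : Continuous (A.restrict g) := hg.restrict
  obtain ⟨G, hG⟩ := ContinuousMap.exists_restrict_eq (Y := ℂ) hAc ⟨A.restrict g, hgr⟩
  have hGA : ∀ z ∈ A, G z = g z := by
    intro z hz
    have := congrFun (congrArg DFunLike.coe hG) ⟨z, hz⟩
    exact this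
  -- the global nonvanishing function
  set Φ : ℂ → ℂ := fun z => if z ∈ closure U then (z - b) * Complex.exp (G z) else z - a
    with hΦ
  have hagree : ∀ z ∈ closure U, z ∉ U → (z - b) * Complex.exp (G z) = z - a := by
    intro z h1 h2
    have hzA : z ∈ A := by
      rcases closure_cc_subset hAc a h1 with h | h
      · exact absurd h h2
      · exact h
    rw [hGA z hzA, he z hzA]
    have hzb : z - b ≠ 0 := sub_ne_zero.mpr (fun h => hb (h ▸ hzA))
    field_simp
  have hΦ1 : EqOn Φ (fun z => (z - b) * Complex.exp (G z)) (closure U) := by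
    intro z hz
    simp only [hΦ, if_pos hz]
  have hΦ2 : EqOn Φ (fun z => z - a) Uᶜ := by
    intro z hz
    by_cases h : z ∈ closure U
    · simp only [hΦ, if_pos h]
      exact hagree z h hz
    · simp only [hΦ, if_neg h]
  have hΦc : Continuous Φ := by
    rw [← continuousOn_univ]
    have hcover : (univ : Set ℂ) ⊆ closure U ∪ Uᶜ := by
      intro z _
      by_cases h : z ∈ U
      · exact Or.inl (subset_closure h)
      · exact Or.inr h
    apply ContinuousOn.mono _ hcover
    intro x hx
    have hcwa1 : ContinuousWithinAt Φ (closure U) x := by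
      by_cases h : x ∈ closure U
      · exact ((continuous_id.sub continuous_const).mul
          (Complex.continuous_exp.comp G.continuous)).continuousOn.congr hΦ1 x h
          |>.mono subset_rfl
      · exact continuousWithinAt_of_notMem_closure (by rwa [closure_closure])
    have hcwa2 : ContinuousWithinAt Φ Uᶜ x := by
      by_cases h : x ∈ Uᶜ
      · exact ((continuous_id.sub continuous_const).continuousOn.congr hΦ2) x h
      · apply continuousWithinAt_of_notMem_closure
        rwa [IsClosed.closure_eq (isClosed_compl_iff.mpr
          (hAc.isOpen_compl.connectedComponentIn))]
    exact hcwa1.union hcwa2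
  have hΦne : ∀ z, Φ z ≠ 0 := by
    intro z
    by_cases h : z ∈ closure U
    · simp only [hΦ, if_pos h]
      apply mul_ne_zero _ (Complex.exp_ne_zero _)
      refine sub_ne_zero.mpr (fun hcon => hbU ?_)
      rw [← hcon]; exact h
    · simp only [hΦ, if_neg h]
      refine sub_ne_zero.mpr (fun hcon => h ?_)
      rw [hcon]; exact subset_closure haU
  -- a big circle around `a` avoiding `closure U`
  obtain ⟨ρ, hρ⟩ := (Metric.isBounded_iff_subset_closedBall a).mp hUb.closure
  set R := max ρ 0 + 1 with hR
  have hRpos : 0 < R := by positivity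
  have hsphere : ∀ z ∈ Metric.sphere a R, z ∉ closure U := by
    intro z hzs hzU
    have h1 := hρ hzU
    rw [Metric.mem_closedBall] at h1
    rw [Metric.mem_sphere] at hzs
    have : ρ ≤ max ρ 0 := le_max_left _ _
    rw [hzs] at h1
    linarith [hzs ▸ h1]
  obtain ⟨ℓ, hℓc, hℓ⟩ := exists_log_on_closedBall Φ hΦc hΦne a R hRpos.le
  apply no_log_on_sphere hRpos ℓ (hℓc.mono Metric.sphere_subset_closedBall)
  intro z hz
  rw [hℓ z (Metric.sphere_subset_closedBall hz)]
  have hzU : z ∉ closure U := hsphere z hz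
  simp only [hΦ, if_neg hzU]

/-- A compact set with a continuous logarithm of `(z-a)/(z-b)` does not separate `a` from `b`. -/
lemma same_component_of_log_compact {A : Set ℂ} (hA : IsCompact A) {a b : ℂ}
    (ha : a ∉ A) (hb : b ∉ A) (g : ℂ → ℂ) (hg : ContinuousOn g A)
    (he : ∀ z ∈ A, Complex.exp (g z) = (z - a) / (z - b)) :
    connectedComponentIn Aᶜ a = connectedComponentIn Aᶜ b := by
  by_contra hne
  obtain ⟨r, hr0, hrA⟩ : ∃ r : ℝ, 0 ≤ r ∧ A ⊆ Metric.closedBall 0 r := by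
    obtain ⟨r, hr⟩ := (Metric.isBounded_iff_subset_closedBall 0).mp hA.isBounded
    exact ⟨max r 0, le_max_right _ _, hr.trans
      (Metric.closedBall_subset_closedBall (le_max_left _ _))⟩
  -- at least one of the two components is bounded
  have hkey : ∀ u v : ℂ, u ∈ Aᶜ → v ∈ Aᶜ → r < ‖u‖ → r < ‖v‖ →
      connectedComponentIn Aᶜ u = connectedComponentIn Aᶜ v := by
    intro u v hu hv h1 h2
    apply cc_of_joinedIn
    refine (joinedIn_norm_gt hr0 h1 h2).mono ?_
    intro z hz
    simp only [mem_setOf_eq] at hz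
    intro hzA
    have := hrA hzA
    rw [Metric.mem_closedBall, dist_zero_right] at this
    linarith
  have hbnd : Bornology.IsBounded (connectedComponentIn Aᶜ a) ∨
      Bornology.IsBounded (connectedComponentIn Aᶜ b) := by
    by_contra hcon
    push_neg at hcon
    obtain ⟨h1, h2⟩ := hcon
    obtain ⟨u, huU, hu⟩ : ∃ u ∈ connectedComponentIn Aᶜ a, r < ‖u‖ := by
      by_contra hc
      push_neg at hc
      exact h1 ((Metric.isBounded_iff_subset_closedBall 0).mpr
        ⟨r, fun z hz => by rw [Metric.mem_closedBall, dist_zero_right]; exact hc z hz⟩)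
    obtain ⟨v, hvW, hv⟩ : ∃ v ∈ connectedComponentIn Aᶜ b, r < ‖v‖ := by
      by_contra hc
      push_neg at hc
      exact h2 ((Metric.isBounded_iff_subset_closedBall 0).mpr
        ⟨r, fun z hz => by rw [Metric.mem_closedBall, dist_zero_right]; exact hc z hz⟩)
    have e1 : connectedComponentIn Aᶜ a = connectedComponentIn Aᶜ u :=
      connectedComponentIn_eq huU
    have e2 : connectedComponentIn Aᶜ b = connectedComponentIn Aᶜ v :=
      connectedComponentIn_eq hvW
    exact hne (e1.trans ((hkey u v (connectedComponentIn_subset _ _ huU)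
      (connectedComponentIn_subset _ _ hvW) hu hv).trans e2.symm))
  rcases hbnd with h | h
  · exact compact_core hA ha hb g hg he h hne
  · refine compact_core hA hb ha (fun z => -g z) hg.neg (fun z hz => ?_) h (Ne.symm hne)
    rw [Complex.exp_neg, he z hz, inv_div]

/-- Bound for the principal logarithm near `1`. -/
lemma norm_log_le_of_near_one {w : ℂ} (hw : ‖w - 1‖ < 1/2) :
    ‖Complex.log w‖ ≤ 1 + Real.pi := by
  have hlo : (1:ℝ)/2 ≤ ‖w‖ := by
    have h1 : ‖(1:ℂ)‖ - ‖w‖ ≤ ‖(1:ℂ) - w‖ := norm_sub_norm_le 1 w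
    rw [norm_one, norm_sub_rev] at h1
    linarith
  have hhi : ‖w‖ ≤ 2 := by
    have h1 : ‖w‖ ≤ ‖w - 1‖ + ‖(1:ℂ)‖ := by
      have := norm_add_le (w - 1) 1
      simpa using this
    simp only [norm_one] at h1
    linarith
  have hw0 : ‖w‖ ≠ 0 := by positivity
  have hl2 : Real.log 2 < 1 := by
    have := Real.log_two_lt_d9
    linarith
  have hre : |Real.log (‖w‖)| ≤ 1 := by
    rw [abs_le]
    constructor
    · have h1 : Real.log (1/2) ≤ Real.log (‖w‖) := by
        rw [Real.log_le_log_iff (by norm_num) (by positivity)]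
        exact hlo
      have h2 : Real.log (1/2) = -Real.log 2 := by
        rw [show (1:ℝ)/2 = 2⁻¹ by norm_num, Real.log_inv]
      linarith
    · have h1 : Real.log (‖w‖) ≤ Real.log 2 := by
        rw [Real.log_le_log_iff (by positivity) (by norm_num)]
        exact hhi
      linarith
  calc ‖Complex.log w‖ = ‖Complex.log w‖ := rfl
    _ ≤ |(Complex.log w).re| + |(Complex.log w).im| := Complex.norm_le_abs_re_add_abs_im _
    _ ≤ 1 + Real.pi := by
        rw [Complex.log_re, Complex.log_im]
        exact add_le_add hre (Complex.abs_arg_le_pi w)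

/-- The converse criterion: a closed set carrying a vanishing-at-infinity logarithm of
`(z-a)/(z-b)` does not separate `a` from `b`. -/
lemma same_component_of_hasLog {A : Set ℂ} (hA : IsClosed A) {a b : ℂ}
    (ha : a ∉ A) (hb : b ∉ A) (hlog : HasLog A a b) :
    connectedComponentIn Aᶜ a = connectedComponentIn Aᶜ b := by
  classical
  by_contra hne
  obtain ⟨g, hg, he, ht⟩ := hlog
  -- decay bound
  obtain ⟨r₁, hr₁⟩ : ∃ r₁ : ℝ, ∀ z : ℂ, r₁ ≤ ‖z‖ → z ∈ A → ‖g z‖ < 1 := by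
    have h1 := Metric.tendsto_nhds.mp ht 1 one_pos
    rw [Filter.eventually_inf_principal] at h1
    rw [← comap_norm_atTop] at h1
    rw [Filter.eventually_comap] at h1
    obtain ⟨r₁, hr₁⟩ := Filter.eventually_atTop.mp h1
    refine ⟨r₁, fun z hz hzA => ?_⟩
    have := hr₁ ‖z‖ hz z rfl hzA
    rwa [dist_zero_right] at this
  set R : ℝ := max r₁ 0 + ‖a‖ + ‖b‖ + 2 * ‖a - b‖ + 1 with hR
  have hRr₁ : r₁ ≤ R := by
    have h1 : r₁ ≤ max r₁ 0 := le_max_left _ _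
    have : (0:ℝ) ≤ ‖a‖ + ‖b‖ + 2*‖a-b‖ + 1 := by positivity
    linarith
  have hRa : ‖a‖ < R := by
    have h1 : (0:ℝ) ≤ max r₁ 0 := le_max_right _ _
    have : (0:ℝ) ≤ ‖b‖ + 2*‖a-b‖ := by positivity
    linarith
  have hRb : ‖b‖ + 2 * ‖a - b‖ + 1 ≤ R := by
    have h1 : (0:ℝ) ≤ max r₁ 0 := le_max_right _ _
    have : (0:ℝ) ≤ ‖a‖ := by positivity
    linarith
  have hRpos : 0 < R := by
    have : (0:ℝ) ≤ ‖b‖ + 2*‖a-b‖ := by positivity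
    linarith [hRb]
  have hsz : ∀ z ∈ Metric.sphere (0:ℂ) R, ‖z‖ = R := by
    intro z hz
    rwa [Metric.mem_sphere, dist_zero_right] at hz
  have hzbne : ∀ z ∈ Metric.sphere (0:ℂ) R, z - b ≠ 0 := by
    intro z hz
    have h1 : ‖z - b‖ ≥ ‖z‖ - ‖b‖ := norm_sub_norm_le z b
    rw [hsz z hz] at h1
    intro hcon
    rw [hcon, norm_zero] at h1
    have : (0:ℝ) ≤ ‖a - b‖ := norm_nonneg _
    linarith
  have hzane : ∀ z ∈ Metric.sphere (0:ℂ) R, z - a ≠ 0 := by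
    intro z hz
    have h1 : ‖z - a‖ ≥ ‖z‖ - ‖a‖ := norm_sub_norm_le z a
    rw [hsz z hz] at h1
    intro hcon
    rw [hcon, norm_zero] at h1
    linarith
  have hfone : ∀ z ∈ Metric.sphere (0:ℂ) R, ‖(z - a)/(z - b) - 1‖ < 1/2 := by
    intro z hz
    have hne0 := hzbne z hz
    have heq : (z - a)/(z - b) - 1 = (b - a)/(z - b) := by
      field_simp
      ring
    rw [heq, norm_div]
    have h1 : ‖z - b‖ ≥ ‖z‖ - ‖b‖ := norm_sub_norm_le z b
    rw [hsz z hz] at h1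
    have h2 : 2 * ‖a - b‖ + 1 ≤ ‖z - b‖ := by linarith
    have h3 : ‖b - a‖ = ‖a - b‖ := norm_sub_rev b a
    rw [h3, div_lt_iff₀ (by linarith [norm_nonneg (a-b)])]
    linarith [norm_nonneg (a - b)]
  -- on the sphere, `g` agrees with the principal log of `f`
  have hmatch : ∀ z ∈ A, z ∈ Metric.sphere (0:ℂ) R →
      g z = Complex.log ((z - a)/(z - b)) := by
    intro z hzA hzs
    have hfne : (z - a)/(z - b) ≠ 0 := div_ne_zero (hzane z hzs) (hzbne z hzs)
    have hexp : Complex.exp (g z) = Complex.exp (Complex.log ((z - a)/(z - b))) := by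
      rw [Complex.exp_log hfne]
      exact he z hzA
    obtain ⟨n, hn⟩ := Complex.exp_eq_exp_iff_exists_int.mp hexp
    by_cases hn0 : n = 0
    · rw [hn0] at hn
      simpa using hn
    exfalso
    have hb1 : ‖g z‖ < 1 := hr₁ z (by rw [hsz z hzs]; exact hRr₁) hzA
    have hb2 : ‖Complex.log ((z - a)/(z - b))‖ ≤ 1 + Real.pi :=
      norm_log_le_of_near_one (hfone z hzs)
    have hdiff : ‖g z - Complex.log ((z - a)/(z - b))‖ = |(n:ℝ)| * (2 * Real.pi) := by
      rw [hn]
      have : Complex.log ((z-a)/(z-b)) + (n:ℂ) * (2 * Real.pi * I)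
          - Complex.log ((z-a)/(z-b)) = (n:ℂ) * (2 * Real.pi * I) := by ring
      rw [this, norm_mul, Complex.norm_intCast]
      congr 1
      rw [norm_mul, Complex.norm_I, mul_one]
      rw [show (2 * (Real.pi:ℂ)) = (((2:ℝ) * Real.pi : ℝ) : ℂ) by push_cast; ring]
      rw [Complex.norm_real, Real.norm_eq_abs, _root_.abs_of_pos (by positivity)]
    have h1n : (1:ℝ) ≤ |(n:ℝ)| := by
      rw [← Int.cast_abs]
      exact_mod_cast Int.one_le_abs hn0
    have hπ : 2 < Real.pi := by linarith [Real.pi_gt_three]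
    have hub : ‖g z - Complex.log ((z - a)/(z - b))‖ ≤ ‖g z‖ + ‖Complex.log ((z-a)/(z-b))‖ :=
      norm_sub_le _ _
    have : (2:ℝ) * Real.pi ≤ |(n:ℝ)| * (2 * Real.pi) := by
      nlinarith [Real.pi_pos]
    linarith [hdiff ▸ hub, Real.pi_pos.le]
  -- the compact cutoff set
  set A' : Set ℂ := (A ∩ Metric.closedBall 0 R) ∪ Metric.sphere 0 R with hA'
  have hA'c : IsCompact A' := by
    apply IsCompact.union
    · exact (isCompact_closedBall 0 R).of_isClosed_subset
        (hA.inter Metric.isClosed_closedBall) inter_subset_right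
    · exact isCompact_sphere 0 R
  have haA' : a ∉ A' := by
    rintro (⟨h1, _⟩ | h1)
    · exact ha h1
    · rw [Metric.mem_sphere, dist_zero_right] at h1
      exact hRa.ne h1
  have hbA' : b ∉ A' := by
    rintro (⟨h1, _⟩ | h1)
    · exact hb h1
    · rw [Metric.mem_sphere, dist_zero_right] at h1
      have : (0:ℝ) ≤ ‖a - b‖ := norm_nonneg _
      linarith [h1]
  set g' : ℂ → ℂ := fun z => if z ∈ Metric.sphere (0:ℂ) R
    then Complex.log ((z - a)/(z - b)) else g z with hg'
  have hg'sph : EqOn g' (fun z => Complex.log ((z - a)/(z - b))) (Metric.sphere (0:ℂ) R) := by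
    intro z hz
    simp only [hg', if_pos hz]
  have hg'A : EqOn g' g (A ∩ Metric.closedBall 0 R) := by
    intro z hz
    by_cases h : z ∈ Metric.sphere (0:ℂ) R
    · simp only [hg', if_pos h]
      exact (hmatch z hz.1 h).symm
    · simp only [hg', if_neg h]
  have hsphcont : ContinuousOn (fun z : ℂ => Complex.log ((z - a)/(z - b)))
      (Metric.sphere (0:ℂ) R) := by
    apply ContinuousOn.clog
    · apply ContinuousOn.div
      · fun_prop
      · fun_prop
      · exact fun z hz => hzbne z hz
    · intro z hz
      exact mem_slitPlane_of_norm_lt_one (lt_trans (hfone z hz) (by norm_num))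
  have hg'c : ContinuousOn g' A' := by
    intro x hx
    have hcwa1 : ContinuousWithinAt g' (A ∩ Metric.closedBall 0 R) x := by
      by_cases h : x ∈ A ∩ Metric.closedBall 0 R
      · exact ((hg.mono inter_subset_left).congr hg'A) x h
      · exact continuousWithinAt_of_notMem_closure (by
          rwa [IsClosed.closure_eq (hA.inter Metric.isClosed_closedBall)])
    have hcwa2 : ContinuousWithinAt g' (Metric.sphere (0:ℂ) R) x := by
      by_cases h : x ∈ Metric.sphere (0:ℂ) R
      · exact (hsphcont.congr hg'sph) x h
      · exact continuousWithinAt_of_notMem_closure (by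
          rwa [IsClosed.closure_eq Metric.isClosed_sphere])
    exact (hcwa1.union hcwa2)
  have hg'exp : ∀ z ∈ A', Complex.exp (g' z) = (z - a)/(z - b) := by
    intro z hz
    by_cases h : z ∈ Metric.sphere (0:ℂ) R
    · rw [hg'sph h]
      exact Complex.exp_log (div_ne_zero (hzane z h) (hzbne z h))
    · rcases hz with h1 | h1
      · simp only [hg', if_neg h]
        exact he z h1.1
      · exact absurd h1 h
  -- A' separates a and b
  have hne' : connectedComponentIn A'ᶜ a ≠ connectedComponentIn A'ᶜ b := by
    intro heq
    have hJ : JoinedIn A'ᶜ a b :=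
      joinedIn_of_cc hA'c.isClosed.isOpen_compl haA' hbA' heq
    obtain ⟨γ, hγ⟩ := hJ
    have hrange : range γ ⊆ A'ᶜ := range_subset_iff.mpr hγ
    have hcover : range γ ⊆ Metric.ball 0 R ∪ (Metric.closedBall 0 R)ᶜ := by
      intro z hz
      have hzA' := hrange hz
      have hzs : z ∉ Metric.sphere (0:ℂ) R := fun h => hzA' (Or.inr h)
      rcases lt_trichotomy (dist z 0) R with h | h | h
      · exact Or.inl (Metric.mem_ball.mpr h)
      · exact absurd (Metric.mem_sphere.mpr h) hzs
      · exact Or.inr (fun hc => absurd (Metric.mem_closedBall.mp hc) (not_le.mpr h))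
    have hball : range γ ⊆ Metric.ball 0 R := by
      apply IsPreconnected.subset_left_of_subset_union Metric.isOpen_ball
        Metric.isClosed_closedBall.isOpen_compl
        (Disjoint.mono_left Metric.ball_subset_closedBall disjoint_compl_right)
        hcover
        ⟨a, ⟨⟨0, γ.source⟩, by rw [Metric.mem_ball, dist_zero_right]; exact hRa⟩⟩
      exact (isConnected_range γ.continuous).isPreconnected
    have hJA : JoinedIn Aᶜ a b := by
      refine ⟨γ, fun t => ?_⟩
      intro hzA
      have h1 : γ t ∈ Metric.ball 0 R := hball (mem_range_self t)
      exact hγ t (Or.inl ⟨hzA, Metric.ball_subset_closedBall h1⟩)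
    exact hne (cc_of_joinedIn hJA)
  exact hne' (same_component_of_log_compact hA'c haA' hbA' g' hg'c hg'exp)

/-- Janiszewski's theorem for disjoint closed sets in the plane. -/
lemma janiszewski {P Q : Set ℂ} (hP : IsClosed P) (hQ : IsClosed Q) (hdisj : Disjoint P Q)
    {a b : ℂ} (haP : a ∉ P) (haQ : a ∉ Q) (hbP : b ∉ P) (hbQ : b ∉ Q)
    (h1 : connectedComponentIn Pᶜ a = connectedComponentIn Pᶜ b)
    (h2 : connectedComponentIn Qᶜ a = connectedComponentIn Qᶜ b) :
    connectedComponentIn (P ∪ Q)ᶜ a = connectedComponentIn (P ∪ Q)ᶜ b := by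
  classical
  obtain ⟨gP, hgPc, hgPe, hgPt⟩ := hasLog_of_same_component hP haP hbP h1
  obtain ⟨gQ, hgQc, hgQe, hgQt⟩ := hasLog_of_same_component hQ haQ hbQ h2
  set g : ℂ → ℂ := fun z => if z ∈ P then gP z else gQ z with hg
  have hgP : EqOn g gP P := fun z hz => by simp only [hg, if_pos hz]
  have hgQ : EqOn g gQ Q := fun z hz => by
    have : z ∉ P := fun hc => (hdisj.ne_of_mem hc hz) rfl
    simp only [hg, if_neg this]
  apply same_component_of_hasLog (hP.union hQ) (fun h => h.elim haP haQ)
    (fun h => h.elim hbP hbQ)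
  refine ⟨g, ?_, ?_, ?_⟩
  · intro x hx
    have hcwa1 : ContinuousWithinAt g P x := by
      by_cases h : x ∈ P
      · exact (hgPc.congr hgP) x h
      · exact continuousWithinAt_of_notMem_closure (by rwa [hP.closure_eq])
    have hcwa2 : ContinuousWithinAt g Q x := by
      by_cases h : x ∈ Q
      · exact (hgQc.congr hgQ) x h
      · exact continuousWithinAt_of_notMem_closure (by rwa [hQ.closure_eq])
    exact hcwa1.union hcwa2
  · intro z hz
    rcases hz with h | h
    · rw [hgP h]; exact hgPe z h
    · rw [hgQ h]; exact hgQe z h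
  · rw [Metric.tendsto_nhds]
    intro ε hε
    have e1 := Metric.tendsto_nhds.mp hgPt ε hε
    have e2 := Metric.tendsto_nhds.mp hgQt ε hε
    rw [Filter.eventually_inf_principal] at e1 e2 ⊢
    filter_upwards [e1, e2] with z hz1 hz2 hzmem
    rcases hzmem with h | h
    · rw [hgP h]; exact hz1 h
    · rw [hgQ h]; exact hz2 h

/-- `S` separates `a` from `b`. -/
def Separates (S : Set ℂ) (a b : ℂ) : Prop :=
  connectedComponentIn Sᶜ a ≠ connectedComponentIn Sᶜ b

/-- The main theorem over `ℂ`: a component of a closed separating set separates. -/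
theorem stmt_complex (A : Set ℂ) (hA : IsClosed A) (a b : ℂ)
    (ha : a ∉ A) (hb : b ∉ A) (hsep : Separates A a b) :
    ∃ k ∈ A, Separates (connectedComponentIn A k) a b := by
  classical
  set 𝒮 : Set (Set ℂ) := {S | S ⊆ A ∧ IsClosed S ∧ Separates S a b} with h𝒮
  have hA𝒮 : A ∈ 𝒮 := ⟨subset_rfl, hA, hsep⟩
  -- Zorn: minimal separator
  obtain ⟨M, hMA, hM𝒮, hMmin⟩ : ∃ M, M ⊆ A ∧ M ∈ 𝒮 ∧ ∀ S ∈ 𝒮, S ⊆ M → S = M := by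
    have hzorn : ∀ c ⊆ 𝒮, IsChain (· ⊆ ·) c → c.Nonempty → ∃ lb ∈ 𝒮, ∀ s ∈ c, lb ⊆ s := ?_
    · obtain ⟨M, hsub, hmin⟩ := zorn_superset_nonempty 𝒮 hzorn A hA𝒮
      exact ⟨M, hsub, hmin.prop, fun S hS hSM => Subset.antisymm hSM (hmin.2 hS hSM)⟩
    intro c hc𝒮 hchain hcne
    refine ⟨⋂₀ c, ⟨?_, ?_, ?_⟩, fun s hs => sInter_subset_of_mem hs⟩
    · obtain ⟨S, hS⟩ := hcne
      exact (sInter_subset_of_mem hS).trans (hc𝒮 hS).1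
    · exact isClosed_sInter (fun S hS => (hc𝒮 hS).2.1)
    · -- the intersection still separates
      intro heq
      have hclosed : IsClosed (⋂₀ c) := isClosed_sInter (fun S hS => (hc𝒮 hS).2.1)
      have haI : a ∈ (⋂₀ c)ᶜ := by
        intro hmem
        obtain ⟨S, hS⟩ := hcne
        exact ha ((hc𝒮 hS).1 (hmem S hS))
      have hbI : b ∈ (⋂₀ c)ᶜ := by
        intro hmem
        obtain ⟨S, hS⟩ := hcne
        exact hb ((hc𝒮 hS).1 (hmem S hS))
      obtain ⟨γ, hγ⟩ := joinedIn_of_cc hclosed.isOpen_compl haI hbI heq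
      -- some member of the chain misses the path
      have hmiss : ∃ S ∈ c, S ∩ range γ = ∅ := by
        by_contra hcon
        push_neg at hcon
        have hne' : ∀ S : c, (S.1 ∩ range γ).Nonempty := fun S => hcon S.1 S.2
        have hdir : Directed (· ⊇ ·) (fun S : c => S.1 ∩ range γ) := by
          intro S T
          rcases hchain.total S.2 T.2 with h | h
          · exact ⟨S, subset_rfl, inter_subset_inter_left _ h⟩
          · exact ⟨T, inter_subset_inter_left _ h, subset_rfl⟩
        obtain ⟨S₀', hS₀'⟩ := hcne
        haveI : Nonempty c := ⟨⟨S₀', hS₀'⟩⟩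
        have S₀ : c := ⟨S₀', hS₀'⟩
        have hcompact : ∀ S : c, IsCompact (S.1 ∩ range γ) :=
          fun S => (isCompact_range γ.continuous).of_isClosed_subset
            ((hc𝒮 S.2).2.1.inter (isCompact_range γ.continuous).isClosed)
            inter_subset_right
        obtain ⟨z, hz⟩ := IsCompact.nonempty_iInter_of_directed_nonempty_isCompact_isClosed
          (fun S : c => S.1 ∩ range γ) hdir hne' hcompact
          (fun S => ((hc𝒮 S.2).2.1.inter (isCompact_range γ.continuous).isClosed))
        have hzI : z ∈ ⋂₀ c := by
          intro S hS
          exact (mem_iInter.mp hz ⟨S, hS⟩).1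
        obtain ⟨t, ht⟩ : z ∈ range γ := (mem_iInter.mp hz S₀).2
        exact (hγ t) (ht ▸ hzI)
      obtain ⟨S, hSc, hSmiss⟩ := hmiss
      apply (hc𝒮 hSc).2.2
      apply cc_of_joinedIn
      refine ⟨γ, fun t => ?_⟩
      intro hmem
      have : γ t ∈ S ∩ range γ := ⟨hmem, mem_range_self t⟩
      rw [hSmiss] at this
      exact this
  have haM : a ∉ M := fun h => ha (hMA h)
  have hbM : b ∉ M := fun h => hb (hMA h)
  have hMsep : Separates M a b := hM𝒮.2.2
  -- M is nonempty
  have hMne : M.Nonempty := by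
    rcases eq_empty_or_nonempty M with h | h
    · exfalso
      apply hMsep
      rw [h, compl_empty]
      rw [connectedComponentIn_univ, connectedComponentIn_univ,
        PreconnectedSpace.connectedComponent_eq_univ,
        PreconnectedSpace.connectedComponent_eq_univ]
    · exact h
  -- M is preconnected
  have hMpre : IsPreconnected M := by
    by_contra hcon
    rw [IsPreconnected] at hcon
    push_neg at hcon
    obtain ⟨u, v, hu, hv, hcover, ⟨zu, hzu⟩, ⟨zv, hzv⟩, hempty⟩ := hcon
    have hPQempty : M ∩ (u ∩ v) = ∅ := hempty
    set P : Set ℂ := M ∩ vᶜ with hPdef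
    set Q : Set ℂ := M ∩ uᶜ with hQdef
    have hPc : IsClosed P := hM𝒮.2.1.inter hv.isClosed_compl
    have hQc : IsClosed Q := hM𝒮.2.1.inter hu.isClosed_compl
    have hPQ : P ∪ Q = M := by
      apply Subset.antisymm (union_subset inter_subset_left inter_subset_left)
      intro z hz
      by_cases h : z ∈ v
      · refine Or.inr ⟨hz, fun hcu => ?_⟩
        have : z ∈ M ∩ (u ∩ v) := ⟨hz, hcu, h⟩
        rw [hPQempty] at this
        exact this
      · exact Or.inl ⟨hz, h⟩
    have hdisj : Disjoint P Q := by
      rw [disjoint_iff_inter_eq_empty]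
      apply eq_empty_iff_forall_notMem.mpr
      rintro z ⟨⟨hzM, hzv⟩, ⟨_, hzu⟩⟩
      rcases hcover hzM with h | h
      · exact hzu h
      · exact hzv h
    have hzvQ : zv ∈ Q := by
      refine ⟨hzv.1, fun hcu => ?_⟩
      have : zv ∈ M ∩ (u ∩ v) := ⟨hzv.1, hcu, hzv.2⟩
      rw [hPQempty] at this
      exact this
    have hzuP : zu ∈ P := by
      refine ⟨hzu.1, fun hcv => ?_⟩
      have : zu ∈ M ∩ (u ∩ v) := ⟨hzu.1, hzu.2, hcv⟩
      rw [hPQempty] at this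
      exact this
    have hPproper : P ≠ M := by
      intro h
      have h1 : zv ∈ P := h.symm ▸ hzv.1
      exact h1.2 hzv.2
    have hQproper : Q ≠ M := by
      intro h
      have h1 : zu ∈ Q := h.symm ▸ hzu.1
      exact h1.2 hzu.2
    have haPmem : a ∉ P := fun h => haM h.1
    have hbPmem : b ∉ P := fun h => hbM h.1
    have haQmem : a ∉ Q := fun h => haM h.1
    have hbQmem : b ∉ Q := fun h => hbM h.1
    have hPns : ¬ Separates P a b := by
      intro hsepP
      exact hPproper (hMmin P ⟨(inter_subset_left).trans hMA, hPc, hsepP⟩ inter_subset_left)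
    have hQns : ¬ Separates Q a b := by
      intro hsepQ
      exact hQproper (hMmin Q ⟨(inter_subset_left).trans hMA, hQc, hsepQ⟩ inter_subset_left)
    rw [Separates, not_not] at hPns hQns
    have := janiszewski hPc hQc hdisj haPmem haQmem hbPmem hbQmem hPns hQns
    rw [hPQ] at this
    exact hMsep this
  -- conclude: the component of A containing M separates
  obtain ⟨k, hk⟩ := hMne
  refine ⟨k, hMA hk, ?_⟩
  have hMK : M ⊆ connectedComponentIn A k :=
    hMpre.subset_connectedComponentIn hk hMA
  have hKclosed : IsClosed (connectedComponentIn A k) := by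
    rw [connectedComponentIn_eq_image (hMA hk)]
    exact (hA.isClosedMap_subtype_val) _ isClosed_connectedComponent
  intro heq
  have haK : a ∈ (connectedComponentIn A k)ᶜ :=
    fun h => ha (connectedComponentIn_subset _ _ h)
  have hbK : b ∈ (connectedComponentIn A k)ᶜ :=
    fun h => hb (connectedComponentIn_subset _ _ h)
  have hJ := joinedIn_of_cc hKclosed.isOpen_compl haK hbK heq
  exact hMsep (cc_of_joinedIn (hJ.mono (compl_subset_compl.mpr hMK)))

lemma homeomorph_image_connectedComponentIn {X Y : Type*} [TopologicalSpace X]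
    [TopologicalSpace Y] (h : X ≃ₜ Y) (s : Set X) (x : X) :
    h '' connectedComponentIn s x = connectedComponentIn (h '' s) (h x) := by
  by_cases hx : x ∈ s
  · apply Subset.antisymm
    · exact h.continuous.image_connectedComponentIn_subset hx
    · have h2 := h.symm.continuous.image_connectedComponentIn_subset (s := h '' s)
        (a := h x) (mem_image_of_mem h hx)
      rw [show ⇑h.symm '' (⇑h '' s) = s from by rw [← image_comp]; simp,
        h.symm_apply_apply] at h2
      intro y hy
      have hmem : h.symm y ∈ connectedComponentIn s x := h2 (mem_image_of_mem _ hy)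
      exact ⟨h.symm y, hmem, h.apply_symm_apply y⟩
  · rw [connectedComponentIn_eq_empty hx, connectedComponentIn_eq_empty
      (fun hc => hx ((h.injective.mem_set_image).mp hc)), image_empty]

/-- Lemma 2.5 of the paper. If a closed subset `A` of the plane separates
two points `x` and `y` (i.e. they lie in different connected components of the complement),
then some connected component of `A` already separates `x` and `y`. -/
theorem stmt_0 (A : Set (ℝ × ℝ)) (hA : IsClosed A) (x y : ℝ × ℝ)
    (hx : x ∉ A) (hy : y ∉ A)
    (hsep : connectedComponentIn Aᶜ x ≠ connectedComponentIn Aᶜ y) :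
    ∃ k ∈ A, connectedComponentIn (connectedComponentIn A k)ᶜ x ≠
      connectedComponentIn (connectedComponentIn A k)ᶜ y := by
  set e : ℝ × ℝ ≃ₜ ℂ := Complex.equivRealProdCLM.toHomeomorph.symm with he
  set A' : Set ℂ := e '' A with hA'def
  have hA'closed : IsClosed A' := (Homeomorph.isClosed_image e).mpr hA
  have hx' : e x ∉ A' := by
    rintro ⟨z, hz1, hz2⟩
    exact hx (e.injective hz2 ▸ hz1)
  have hy' : e y ∉ A' := by
    rintro ⟨z, hz1, hz2⟩
    exact hy (e.injective hz2 ▸ hz1)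
  have htrans : ∀ (s : Set (ℝ × ℝ)) (p : ℝ × ℝ),
      connectedComponentIn (e '' s)ᶜ (e p) = e '' connectedComponentIn sᶜ p := by
    intro s p
    rw [← Set.image_compl_eq e.bijective]
    exact (homeomorph_image_connectedComponentIn e sᶜ p).symm
  have hsep' : Separates A' (e x) (e y) := by
    intro heq
    apply hsep
    rw [hA'def, htrans A x, htrans A y] at heq
    exact (Set.image_eq_image e.injective).mp heq
  obtain ⟨k, hkA', hk⟩ := stmt_complex A' hA'closed (e x) (e y) hx' hy' hsep'
  refine ⟨e.symm k, ?_, ?_⟩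
  · obtain ⟨k₀, hk₀, hk₀e⟩ := hkA'
    rwa [← hk₀e, e.symm_apply_apply]
  · intro heq
    apply hk
    have hKeq : connectedComponentIn A' k = e '' connectedComponentIn A (e.symm k) := by
      rw [homeomorph_image_connectedComponentIn e A (e.symm k), e.apply_symm_apply, hA'def]
    show connectedComponentIn (connectedComponentIn A' k)ᶜ (e x)
      = connectedComponentIn (connectedComponentIn A' k)ᶜ (e y)
    rw [hKeq, htrans _ x, htrans _ y]
    exact congrArg (Set.image e) heq
end
end

section
/- Let (U_i)_{i ∈ ℕ} be a sequence of pairwise disjoint nonempty open subsets of ℝ², and for each i let x_i ∈ U_i. Suppose the sequence (x_i) converges to a point x ∈ ℝ². Then x ∉ ⋃_i U_i, and for each i there exists a point y_i in the frontier Fr U_i such that the sequence (y_i) converges to x. -/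
open Filter Topology


lemma aux_inter_frontier {α : Type*} [TopologicalSpace α] {s t : Set α}
    (hs : IsPreconnected s) (h1 : (s ∩ t).Nonempty) (h2 : (s \ t).Nonempty) :
    (s ∩ frontier t).Nonempty := by
  by_contra h
  rw [Set.not_nonempty_iff_eq_empty] at h
  have hsub : s ⊆ interior t ∪ (closure t)ᶜ := by
    intro z hz
    have hzf : z ∉ frontier t := fun hf => (Set.eq_empty_iff_forall_notMem.1 h z) ⟨hz, hf⟩
    by_cases hc : z ∈ closure t
    · left
      by_contra hi
      exact hzf ⟨hc, hi⟩
    · right; exact hc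
  obtain ⟨a, ha, hat⟩ := h1
  obtain ⟨b, hb, hbt⟩ := h2
  have h1' : (s ∩ interior t).Nonempty := by
    refine ⟨a, ha, ?_⟩
    rcases hsub ha with h' | h'
    · exact h'
    · exact absurd (subset_closure hat) h'
  have h2' : (s ∩ (closure t)ᶜ).Nonempty := by
    refine ⟨b, hb, ?_⟩
    rcases hsub hb with h' | h'
    · exact absurd (interior_subset h') hbt
    · exact h'
  obtain ⟨c, -, hc1, hc2⟩ := hs _ _ isOpen_interior (isClosed_closure.isOpen_compl) hsub h1' h2'
  exact hc2 (subset_closure (interior_subset hc1))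

/-- topological core of Case 1 in the proof of Lemma 2.2. If `(U i)` are
pairwise disjoint nonempty open subsets of the plane, `x i ∈ U i` for each `i`, and the
sequence `x i` converges to `x₀`, then `x₀` lies in none of the `U i`, and one can choose
points `y i ∈ frontier (U i)` converging to `x₀`. -/
theorem stmt_2 (U : ℕ → Set (ℝ × ℝ))
    (hopen : ∀ i, IsOpen (U i))
    (hne : ∀ i, (U i).Nonempty)
    (hdisj : Pairwise (Function.onFun Disjoint U))
    (x : ℕ → ℝ × ℝ) (hx : ∀ i, x i ∈ U i)
    (x₀ : ℝ × ℝ) (hlim : Tendsto x atTop (𝓝 x₀)) :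
    x₀ ∉ ⋃ i, U i ∧
    ∃ y : ℕ → ℝ × ℝ, (∀ i, y i ∈ frontier (U i)) ∧ Tendsto y atTop (𝓝 x₀) := by
  have hnot : ∀ i, x₀ ∉ U i := by
    intro j hj
    have hev : ∀ᶠ i in atTop, x i ∈ U j :=
      hlim.eventually ((hopen j).mem_nhds hj)
    obtain ⟨i, hi, hij⟩ := (hev.and (eventually_gt_atTop j)).exists
    exact (hdisj hij.ne').le_bot ⟨hx i, hi⟩
  constructor
  · simpa using hnot
  · have key : ∀ i, ∃ y, y ∈ segment ℝ (x i) x₀ ∩ frontier (U i) := by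
      intro i
      refine aux_inter_frontier (Convex.isPreconnected (convex_segment _ _))
        ⟨x i, left_mem_segment _ _ _, hx i⟩ ⟨x₀, right_mem_segment _ _ _, hnot i⟩
    choose y hy using key
    refine ⟨y, fun i => (hy i).2, ?_⟩
    have hd : ∀ i, dist (y i) x₀ ≤ dist (x i) x₀ := by
      intro i
      have := dist_add_dist_of_mem_segment (hy i).1
      linarith [dist_nonneg (x := x i) (y := y i)]
    rw [tendsto_iff_dist_tendsto_zero]
    refine squeeze_zero (fun i => dist_nonneg) hd ?_
    rw [← tendsto_iff_dist_tendsto_zero]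
    exact hlim
end

section
/- Let Y be a Hausdorff topological space and f : ℝ² → Y a continuous map. Let (U_i)_{i ∈ ℕ} be a sequence of pairwise disjoint nonempty open subsets of ℝ², and for each i let x_i ∈ U_i. Suppose the sequence (x_i) is bounded and that f(x_i) converges to a point p ∈ Y. Then p ∈ limsup_i f(Fr U_i); that is, every neighborhood of p intersects f(Fr U_i) for infinitely many i. -/
open Filter Topology

lemma aux_frontier {X : Type*} [TopologicalSpace X] {V U : Set X}
    (hV : IsPreconnected V) (hU : IsOpen U)
    (h1 : (V ∩ U).Nonempty) (h2 : ¬ V ⊆ U) : (V ∩ frontier U).Nonempty := by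
  by_contra hcon
  have h : V ∩ frontier U = ∅ := Set.not_nonempty_iff_eq_empty.1 hcon
  obtain ⟨y, hyV, hyU⟩ := Set.not_subset.1 h2
  have hsub : V ⊆ U ∪ (closure U)ᶜ := by
    intro z hz
    by_cases hzc : z ∈ closure U
    · left
      have : z ∉ frontier U := fun hfr => (Set.eq_empty_iff_forall_notMem.1 h z) ⟨hz, hfr⟩
      rw [hU.frontier_eq] at this
      by_contra hzU
      exact this ⟨hzc, hzU⟩
    · right; exact hzc
  have hy2 : y ∈ (closure U)ᶜ := by
    intro hyc
    have : y ∉ frontier U := fun hfr => (Set.eq_empty_iff_forall_notMem.1 h y) ⟨hyV, hfr⟩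
    rw [hU.frontier_eq] at this
    exact this ⟨hyc, hyU⟩
  obtain ⟨z, _, hz1, hz2⟩ := hV U (closure U)ᶜ hU isClosed_closure.isOpen_compl hsub h1 ⟨y, hyV, hy2⟩
  exact hz2 (subset_closure hz1)

/-- Case 1 of Lemma 2.2, for an arbitrary continuous map. Let `Y` be
Hausdorff and `f : ℝ² → Y` continuous. If `(U i)` are pairwise disjoint nonempty open subsets
of the plane, `x i ∈ U i`, the sequence `(x i)` is bounded, and `f (x i) → p`, then every
neighborhood of `p` meets `f '' frontier (U i)` for infinitely many `i`; i.e.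
`p ∈ limsup f (Fr U i)`. -/
theorem stmt_3 {Y : Type*} [TopologicalSpace Y] [T2Space Y]
    (f : ℝ × ℝ → Y) (hf : Continuous f)
    (U : ℕ → Set (ℝ × ℝ))
    (hopen : ∀ i, IsOpen (U i))
    (hne : ∀ i, (U i).Nonempty)
    (hdisj : Pairwise (Function.onFun Disjoint U))
    (x : ℕ → ℝ × ℝ) (hx : ∀ i, x i ∈ U i)
    (hbdd : Bornology.IsBounded (Set.range x))
    (p : Y) (hlim : Tendsto (fun i => f (x i)) atTop (𝓝 p)) :
    ∀ N ∈ 𝓝 p, {i : ℕ | (f '' frontier (U i) ∩ N).Nonempty}.Infinite := by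
  intro N hN
  -- extract a convergent subsequence
  obtain ⟨q, -, φ, hφ, hq⟩ := tendsto_subseq_of_bounded hbdd (fun n => Set.mem_range_self n)
  have hfq : f q = p := by
    have h1 : Tendsto (fun k => f (x (φ k))) atTop (𝓝 (f q)) :=
      (hf.continuousAt.tendsto.comp hq)
    have h2 : Tendsto (fun k => f (x (φ k))) atTop (𝓝 p) :=
      hlim.comp hφ.tendsto_atTop
    exact tendsto_nhds_unique h1 h2
  -- a connected neighborhood of q inside f ⁻¹' N
  have hqN : f ⁻¹' N ∈ 𝓝 q := hf.continuousAt (hfq ▸ hN)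
  obtain ⟨ε, hε, hball⟩ := Metric.mem_nhds_iff.1 hqN
  set V := Metric.ball q ε with hV
  have hVconn : IsPreconnected V := (convex_ball q ε).isPreconnected
  have hqV : q ∈ V := Metric.mem_ball_self hε
  -- x (φ k) ∈ V eventually
  obtain ⟨K, hK⟩ := (Metric.tendsto_atTop.1 hq ε hε)
  -- q belongs to at most one U i; the set of k with q ∈ U (φ k) has ≤ 1 element
  have hsub1 : {k : ℕ | q ∈ U (φ k)}.Subsingleton := by
    intro a ha b hb
    by_contra hab
    have : φ a ≠ φ b := fun h => hab (hφ.injective h)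
    exact (hdisj this).le_bot ⟨ha, hb⟩
  -- the good set of k is infinite
  have hgood : {k : ℕ | K ≤ k ∧ q ∉ U (φ k)}.Infinite := by
    have : {k : ℕ | K ≤ k ∧ q ∉ U (φ k)}ᶜ ⊆ Set.Iio K ∪ {k : ℕ | q ∈ U (φ k)} := by
      intro k hk
      simp only [Set.mem_compl_iff, Set.mem_setOf_eq, not_and, not_not] at hk
      by_cases h : K ≤ k
      · right; exact hk h
      · left; exact lt_of_not_ge h
    have hfin : ({k : ℕ | K ≤ k ∧ q ∉ U (φ k)}ᶜ).Finite :=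
      Set.Finite.subset ((Set.finite_Iio K).union hsub1.finite) this
    have := hfin.infinite_compl
    rwa [compl_compl] at this
  -- each good k yields a frontier point
  have hmem : ∀ k ∈ {k : ℕ | K ≤ k ∧ q ∉ U (φ k)},
      φ k ∈ {i : ℕ | (f '' frontier (U i) ∩ N).Nonempty} := by
    rintro k ⟨hkK, hkq⟩
    have hxV : x (φ k) ∈ V := by
      rw [hV, Metric.mem_ball]
      exact hK k hkK
    have h1 : (V ∩ U (φ k)).Nonempty := ⟨x (φ k), hxV, hx (φ k)⟩
    have h2 : ¬ V ⊆ U (φ k) := fun h => hkq (h hqV)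
    obtain ⟨z, hzV, hzF⟩ := aux_frontier hVconn (hopen (φ k)) h1 h2
    exact ⟨f z, Set.mem_image_of_mem f hzF, hball hzV⟩
  -- conclude
  have : Set.MapsTo φ {k : ℕ | K ≤ k ∧ q ∉ U (φ k)}
      {i : ℕ | (f '' frontier (U i) ∩ N).Nonempty} := hmem
  exact ((hgood.image (hφ.injective.injOn)).mono (Set.image_subset_iff.2 hmem))
end

section
/- Identify the circle S¹ with ℝ/ℤ with its standard circular order, and for a ≠ c let (a,c) denote the open interval of points b such that (a,b,c) is positively ordered. Let 𝒜 be a family of subsets of S¹ such that no two distinct members of 𝒜 link, and let x ∈ S¹. Then at most one member A ∈ 𝒜 contains a sequence (a_i) in S¹ ∖ {x} approaching x monotonically in the positive direction, i.e. with a_i → x in S¹ and a_{i+1} ∈ (a_i, x) for all i. -/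
open Filter Topology

/-- `(a, b, c)` is positively ordered on the circle `ℝ/ℤ`: there are lifts
`ã < b̃ < c̃ < ã + 1` in `ℝ`. -/
def PosOrdered (a b c : UnitAddCircle) : Prop :=
  ∃ x y z : ℝ, (x : UnitAddCircle) = a ∧ (y : UnitAddCircle) = b ∧ (z : UnitAddCircle) = c ∧
    x < y ∧ y < z ∧ z < x + 1

/-- The open interval `(a, c)` on the circle: the set of `b` with `(a, b, c)` positively
ordered. -/
def OInterval (a c : UnitAddCircle) : Set UnitAddCircle :=
  {b | PosOrdered a b c}

/-- Two subsets `A`, `B` of the circle *link* if there are `a, a' ∈ A` and `b, b' ∈ B` with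
`b ∈ (a, a')` and `b' ∈ (a', a)`. -/
def Links (A B : Set UnitAddCircle) : Prop :=
  ∃ a ∈ A, ∃ a' ∈ A, ∃ b ∈ B, ∃ b' ∈ B, b ∈ OInterval a a' ∧ b' ∈ OInterval a' a

/-- `A` contains a sequence in `S¹ ∖ {x}` approaching `x` monotonically in the positive
direction. -/
def ApproachesPos (A : Set UnitAddCircle) (x : UnitAddCircle) : Prop :=
  ∃ a : ℕ → UnitAddCircle, (∀ i, a i ∈ A) ∧ (∀ i, a i ≠ x) ∧
    Tendsto a atTop (𝓝 x) ∧ ∀ i, a (i + 1) ∈ OInterval (a i) x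

lemma uac_coe_eq_coe {s t : ℝ} : (↑s : UnitAddCircle) = ↑t ↔ ∃ n : ℤ, s = t + n := by
  rw [QuotientAddGroup.eq_iff_sub_mem, AddSubgroup.mem_zmultiples_iff]
  constructor
  · rintro ⟨k, hk⟩
    exact ⟨k, by rw [zsmul_eq_mul, mul_one] at hk; linarith⟩
  · rintro ⟨n, hn⟩
    exact ⟨n, by rw [zsmul_eq_mul, mul_one]; linarith⟩

lemma lift_unique {s t : ℝ} (h : (↑s : UnitAddCircle) = ↑t) (h2 : |s - t| < 1) : s = t := by
  obtain ⟨n, hn⟩ := uac_coe_eq_coe.mp h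
  have habs : |(n : ℝ)| < 1 := by rw [hn] at h2; simpa using h2
  have h1 : -1 < (n:ℝ) := by linarith [abs_lt.mp habs]
  have h2' : (n:ℝ) < 1 := (abs_lt.mp habs).2
  have hn1 : (-1:ℤ) < n := by exact_mod_cast h1
  have hn2 : n < (1:ℤ) := by exact_mod_cast h2'
  have : n = 0 := by omega
  rw [this] at hn; simpa using hn

lemma mem_OInterval_iff {c x : ℝ} (h1 : c < x) (h2 : x < c + 1) {y : UnitAddCircle} :
    y ∈ OInterval (↑c) (↑x) ↔ ∃ s : ℝ, (↑s : UnitAddCircle) = y ∧ c < s ∧ s < x := by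
  constructor
  · rintro ⟨u, v, w, hu, hv, hw, huv, hvw, hwu⟩
    obtain ⟨n, hn⟩ := uac_coe_eq_coe.mp hu
    refine ⟨v - n, ?_, ?_, ?_⟩
    · rw [← hv]; exact uac_coe_eq_coe.mpr ⟨-n, by push_cast; ring⟩
    · linarith
    · have hwx : ((w - n : ℝ) : UnitAddCircle) = ↑x :=
        (uac_coe_eq_coe.mpr ⟨-n, by push_cast; ring⟩).trans hw
      have : w - n = x := lift_unique hwx (abs_lt.mpr ⟨by linarith, by linarith⟩)
      linarith
  · rintro ⟨s, hs, h3, h4⟩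
    exact ⟨c, s, x, rfl, hs, rfl, h3, h4, h2⟩

lemma x_not_mem_OInterval (c x : UnitAddCircle) : x ∉ OInterval c x := by
  rintro ⟨u, v, w, _, hv, hw, huv, hvw, hwu⟩
  obtain ⟨n, hn⟩ := uac_coe_eq_coe.mp (hv.trans hw.symm)
  have h1 : (0:ℝ) < -(n:ℝ) := by linarith
  have h2 : -(n:ℝ) < 1 := by linarith
  have h1' : (0:ℤ) < -n := by exact_mod_cast h1
  have h2' : -n < (1:ℤ) := by exact_mod_cast h2
  omega

lemma exists_lift_Ioo {x : UnitAddCircle} {xr : ℝ} (hx : (↑xr : UnitAddCircle) = x)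
    {c : UnitAddCircle} (hc : c ≠ x) :
    ∃ cr : ℝ, (↑cr : UnitAddCircle) = c ∧ xr - 1 < cr ∧ cr < xr := by
  obtain ⟨c0, rfl⟩ := QuotientAddGroup.mk_surjective c
  set f := Int.fract (xr - c0) with hf
  have hfl : xr - f = c0 + ⌊xr - c0⌋ := by
    have := Int.fract_add_floor (xr - c0)
    rw [← hf] at this; linarith
  have hf0 : f ≠ 0 := by
    intro h0
    refine hc ?_
    rw [← hx]
    refine (uac_coe_eq_coe.mpr ⟨⌊xr - c0⌋, ?_⟩).symm
    rw [h0] at hfl; linarith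
  have hfpos : 0 < f := lt_of_le_of_ne (Int.fract_nonneg _) (Ne.symm hf0)
  have hflt : f < 1 := Int.fract_lt_one _
  refine ⟨xr - f, ?_, by linarith, by linarith⟩
  rw [hfl]
  exact uac_coe_eq_coe.mpr ⟨⌊xr - c0⌋, rfl⟩

lemma key {A : Set UnitAddCircle} {x : UnitAddCircle} (h : ApproachesPos A x)
    {xr cr : ℝ} (hx : (↑xr : UnitAddCircle) = x) (hc1 : xr - 1 < cr) (hc2 : cr < xr) :
    ∃ p ∈ A, ∃ s : ℝ, (↑s : UnitAddCircle) = p ∧ cr < s ∧ s < xr := by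
  obtain ⟨a, hmem, hne, htend, hmono⟩ := h
  choose t ht1 ht2 ht3 using fun i => exists_lift_Ioo hx (hne i)
  have hstep : ∀ i, t i < t (i + 1) := by
    intro i
    have hm := hmono i
    rw [← ht1 i, ← hx] at hm
    obtain ⟨s, hs, hs1, hs2⟩ := (mem_OInterval_iff (ht3 i) (by linarith [ht2 i])).mp hm
    have : s = t (i + 1) := lift_unique (hs.trans (ht1 (i + 1)).symm)
      (abs_lt.mpr ⟨by linarith [ht3 (i + 1), ht2 i], by linarith [ht2 (i + 1)]⟩)
    linarith
  by_contra hcon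
  push_neg at hcon
  have hle : ∀ i, t i ≤ cr := by
    intro i
    by_contra hlt
    push_neg at hlt
    exact absurd (hcon (a i) (hmem i) (t i) (ht1 i) hlt) (not_le.mpr (ht3 i))
  have hmonole : ∀ i, t 0 ≤ t i := by
    intro i
    induction i with
    | zero => exact le_refl _
    | succ n ih => exact le_of_lt (lt_of_le_of_lt ih (hstep n))
  set K : Set UnitAddCircle := (fun r : ℝ => (↑r : UnitAddCircle)) '' Set.Icc (t 0) cr with hK
  have hKc : IsCompact K := isCompact_Icc.image (AddCircle.continuous_mk' 1)
  have hxK : x ∉ K := by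
    rintro ⟨s, ⟨hs1, hs2⟩, hsx⟩
    obtain ⟨n, hn⟩ := uac_coe_eq_coe.mp ((show ((s:ℝ):UnitAddCircle) = x from hsx).trans hx.symm ▸ rfl : ((s:ℝ):UnitAddCircle) = ↑xr)
    have h1 : (-1:ℝ) < n := by linarith [ht2 0]
    have h2 : (n:ℝ) < 0 := by linarith
    have h1' : (-1:ℤ) < n := by exact_mod_cast h1
    have h2' : n < (0:ℤ) := by exact_mod_cast h2
    omega
  have hop : IsOpen Kᶜ := hKc.isClosed.isOpen_compl
  obtain ⟨i, hi⟩ := (htend.eventually (hop.mem_nhds hxK)).exists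
  exact hi ⟨t i, ⟨hmonole i, hle i⟩, ht1 i⟩

/-- claim in the proof of Lemma 2.9. In a family of pairwise nonlinking
subsets of the circle, at most one member contains a sequence approaching a given point `x`
monotonically in the positive direction. -/
theorem stmt_5 (𝒜 : Set (Set UnitAddCircle))
    (hnl : ∀ A ∈ 𝒜, ∀ B ∈ 𝒜, A ≠ B → ¬ Links A B)
    (x : UnitAddCircle) :
    ∀ A ∈ 𝒜, ∀ B ∈ 𝒜, ApproachesPos A x → ApproachesPos B x → A = B := by
  intro A hA B hB hAx hBx
  by_contra hne
  refine hnl A hA B hB hne ?_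
  -- fix a lift of x
  obtain ⟨xr, hx⟩ : ∃ xr : ℝ, (↑xr : UnitAddCircle) = x := QuotientAddGroup.mk_surjective x
  -- first point of A
  obtain ⟨a0, hmemA, hneA, -, -⟩ := id hAx
  obtain ⟨ar, har, har1, har2⟩ := exists_lift_Ioo hx (hneA 0)
  -- b ∈ B with lift in (ar, xr)
  obtain ⟨b, hbB, br, hbr, hbr1, hbr2⟩ := key hBx hx har1 har2
  -- a' ∈ A with lift in (br, xr)
  obtain ⟨a', haA, a'r, ha'r, ha'r1, ha'r2⟩ := key hAx hx (by linarith) hbr2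
  -- b' ∈ B with lift in (a'r, xr)
  obtain ⟨b', hb'B, b'r, hb'r, hb'r1, hb'r2⟩ := key hBx hx (by linarith) ha'r2
  refine ⟨a0 0, hmemA 0, a', haA, b, hbB, b', hb'B, ?_, ?_⟩
  · exact ⟨ar, br, a'r, har, hbr, ha'r, hbr1, ha'r1, by linarith⟩
  · refine ⟨a'r, b'r, ar + 1, ha'r, hb'r, ?_, hb'r1, by linarith, by linarith⟩
    rw [← har]
    exact uac_coe_eq_coe.mpr ⟨1, by push_cast; ring⟩
end
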